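/- arXiv:1803.07590 — 3 statements merged into one kernel-verified Lean document; each statement's English description precedes it below -/
import Mathlib

section
/- Let (X_t)_{t≥1} be an i.i.d. sequence of random vectors in ℝ^d, let Ω be a symmetric positive-definite d × d real matrix, and let ψ : ℝ → ℂ be a function such that the characteristic function of X₁ satisfies E[exp(i sᵀX₁)] = ψ(sᵀΩs) for all s ∈ ℝ^d. Then the characteristic function of the loss L satisfies, for all t ∈ ℝ, E[e^{itL}] = ∏_{k=1}^n ψ(t² · β_kᵀΩβ_k)^{h_k − h_{k−1}}. -/
open MeasureTheory ProbabilityTheory Complex Finset Matrix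

/-- The integral of a product of two independent complex random variables is the
product of the integrals (no integrability needed, via the product-measure description). -/
lemma indepFun_integral_mul_complex {ΩS : Type*} [MeasurableSpace ΩS] {μ : Measure ΩS}
    [IsProbabilityMeasure μ] {U V : ΩS → ℂ} (h : IndepFun U V μ)
    (hU : AEMeasurable U μ) (hV : AEMeasurable V μ) :
    ∫ ω, U ω * V ω ∂μ = (∫ ω, U ω ∂μ) * ∫ ω, V ω ∂μ := by
  have hmap : μ.map (fun ω => (U ω, V ω)) = (μ.map U).prod (μ.map V) :=
    (indepFun_iff_map_prod_eq_prod_map_map hU hV).1 h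
  have h1 : ∫ p : ℂ × ℂ, p.1 * p.2 ∂(μ.map (fun ω => (U ω, V ω)))
      = ∫ ω, U ω * V ω ∂μ :=
    integral_map (hU.prodMk hV) (measurable_fst.mul measurable_snd).aestronglyMeasurable
  rw [← h1, hmap, integral_prod_mul (fun x : ℂ => x) (fun x : ℂ => x)]
  congr 1
  · exact integral_map hU aestronglyMeasurable_id
  · exact integral_map hV aestronglyMeasurable_id

/-- Characteristic-function multiplicativity for a finite sum of independent
real random variables. -/
lemma integral_cexp_sum_of_iIndepFun {ΩS : Type*} [MeasurableSpace ΩS] {μ : Measure ΩS}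
    [IsProbabilityMeasure μ] (Z : ℕ → ΩS → ℝ) (hmeas : ∀ i, Measurable (Z i))
    (hindep : iIndepFun Z μ) (s : Finset ℕ) :
    ∫ ω, Complex.exp (Complex.I * (∑ i ∈ s, Z i ω : ℝ)) ∂μ
      = ∏ i ∈ s, ∫ ω, Complex.exp (Complex.I * (Z i ω : ℝ)) ∂μ := by
  classical
  induction s using Finset.induction_on with
  | empty => simp
  | @insert i s hi ih =>
    have hm : Measurable fun x : ℝ => Complex.exp (Complex.I * x) :=
      Complex.measurable_exp.comp (measurable_const.mul Complex.measurable_ofReal)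
    have hsum_meas : Measurable fun ω => (∑ j ∈ s, Z j ω) :=
      Finset.measurable_sum s fun j _ => hmeas j
    have hind : IndepFun (Z i) (fun ω => ∑ j ∈ s, Z j ω) μ := by
      have h' := (hindep.indepFun_finsetSum_of_notMem hmeas hi).symm
      have hfe : (∑ j ∈ s, Z j) = fun ω => ∑ j ∈ s, Z j ω :=
        funext fun ω => by simp [Finset.sum_apply]
      rwa [hfe] at h'
    have hind2 := hind.comp hm hm
    have heq : ∀ ω, Complex.exp (Complex.I * (∑ j ∈ insert i s, Z j ω : ℝ))
        = Complex.exp (Complex.I * (Z i ω : ℝ))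
            * Complex.exp (Complex.I * (∑ j ∈ s, Z j ω : ℝ)) := by
      intro ω
      rw [Finset.sum_insert hi, ← Complex.exp_add]
      push_cast
      ring_nf
    simp_rw [heq]
    rw [Finset.prod_insert hi, ← ih]
    exact indepFun_integral_mul_complex hind2 ((hm.comp (hmeas i)).aemeasurable)
      ((hm.comp hsum_meas).aemeasurable)

/-- **Characteristic function of the loss under an elliptical i.i.d. model.**
Let `(X_t)_{t ≥ 1}` be i.i.d. random vectors in `ℝ^d` whose common characteristic
function is `E[exp(i sᵀ X₁)] = ψ(sᵀ Ω s)` for a symmetric positive-definite matrix `Ω`.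
With liquidity horizons `0 = h₀ < ⋯ < h_n`, weights `β_k = ∑_{j=k}^n b_j` and loss
`L = ∑_{k=1}^n β_k ⬝ (∑_{j=h_{k-1}+1}^{h_k} X_j)`, the characteristic function of `L` is
`E[exp(i t L)] = ∏_{k=1}^n ψ(t² βₖᵀ Ω βₖ)^(h_k - h_{k-1})`. -/
theorem charFun_loss_elliptical
    {ΩS : Type*} [MeasurableSpace ΩS] (μ : Measure ΩS) [IsProbabilityMeasure μ]
    (d n : ℕ) (hd : 1 ≤ d) (hn : 1 ≤ n)
    (h : ℕ → ℕ) (h0 : h 0 = 0) (hmono : ∀ k < n, h k < h (k + 1))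
    (b : ℕ → Fin d → ℝ) (β : ℕ → Fin d → ℝ)
    (hβ : ∀ k, β k = ∑ j ∈ Finset.Icc k n, b j)
    (X : ℕ → ΩS → Fin d → ℝ) (hXmeas : ∀ t, Measurable (X t))
    (hXindep : iIndepFun X μ)
    (hXident : ∀ t, Measure.map (X t) μ = Measure.map (X 1) μ)
    (Ωm : Matrix (Fin d) (Fin d) ℝ) (hΩ : Ωm.PosDef)
    (ψ : ℝ → ℂ)
    (hψ : ∀ s : Fin d → ℝ,
      (∫ ω, Complex.exp (Complex.I * (s ⬝ᵥ X 1 ω)) ∂μ) = ψ (s ⬝ᵥ (Ωm *ᵥ s)))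
    (L : ΩS → ℝ)
    (hL : ∀ ω, L ω =
      ∑ k ∈ Finset.Icc 1 n, β k ⬝ᵥ (∑ j ∈ Finset.Icc (h (k - 1) + 1) (h k), X j ω)) :
    ∀ t : ℝ,
      (∫ ω, Complex.exp (Complex.I * (t * L ω)) ∂μ) =
        ∏ k ∈ Finset.Icc 1 n, (ψ (t ^ 2 * (β k ⬝ᵥ (Ωm *ᵥ β k)))) ^ (h k - h (k - 1)) := by
  classical
  intro t
  -- blocks
  set B : ℕ → Finset ℕ := fun k => Finset.Icc (h (k - 1) + 1) (h k) with hB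
  -- monotonicity of h on [0, n]
  have hle : ∀ i j, i ≤ j → j ≤ n → h i ≤ h j := by
    intro i j hij hjn
    induction j with
    | zero =>
      obtain rfl := Nat.le_zero.mp hij
      exact le_rfl
    | succ m ihm =>
      rcases Nat.eq_or_lt_of_le hij with rfl | hlt
      · exact le_rfl
      · exact le_trans (ihm (by omega) (by omega)) (le_of_lt (hmono m (by omega)))
  -- disjointness of blocks
  have hdisj' : ∀ k k', k' ≤ n → k < k' → Disjoint (B k) (B k') := by
    intro k k' hk'n hkk'
    rw [Finset.disjoint_left]
    intro x hx hx'
    simp only [hB, Finset.mem_Icc] at hx hx'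
    have : h k ≤ h (k' - 1) := hle k (k' - 1) (by omega) (by omega)
    omega
  have hdisj : (↑(Finset.Icc 1 n) : Set ℕ).PairwiseDisjoint B := by
    intro k hk k' hk' hne
    simp only [Finset.coe_Icc, Set.mem_Icc] at hk hk'
    rcases hne.lt_or_gt with hlt | hlt
    · exact hdisj' k k' hk'.2 hlt
    · exact (hdisj' k' k hk.2 hlt).symm
  -- the block-index function
  set κ : ℕ → ℕ := fun j =>
    if hj : ∃ k, k ∈ Finset.Icc 1 n ∧ j ∈ B k then hj.choose else 1 with hκ
  have hκ_eq : ∀ k ∈ Finset.Icc 1 n, ∀ j ∈ B k, κ j = k := by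
    intro k hk j hj
    have hj' : ∃ k, k ∈ Finset.Icc 1 n ∧ j ∈ B k := ⟨k, hk, hj⟩
    have hspec := hj'.choose_spec
    simp only [hκ, dif_pos hj']
    by_contra hne
    exact Finset.disjoint_left.1 (hdisj hspec.1 hk hne) hspec.2 hj
  -- the summands
  set Z : ℕ → ΩS → ℝ := fun j ω => (t • β (κ j)) ⬝ᵥ X j ω with hZ
  have hdot : ∀ c : Fin d → ℝ, Measurable fun x : Fin d → ℝ => c ⬝ᵥ x := by
    intro c
    exact Finset.measurable_sum Finset.univ fun i _ =>
      by fun_prop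
  have hZmeas : ∀ j, Measurable (Z j) := fun j => (hdot _).comp (hXmeas j)
  have hZindep : iIndepFun Z μ :=
    hXindep.comp (fun j x => (t • β (κ j)) ⬝ᵥ x) fun j => hdot _
  set U : Finset ℕ := (Finset.Icc 1 n).biUnion B with hU
  have hdotsum : ∀ (v : Fin d → ℝ) (s : Finset ℕ) (w : ℕ → Fin d → ℝ),
      v ⬝ᵥ (∑ j ∈ s, w j) = ∑ j ∈ s, v ⬝ᵥ w j := by
    intro v s w
    simp only [dotProduct, Finset.sum_apply, Finset.mul_sum]
    exact Finset.sum_comm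
  -- rewrite t * L ω as a flat sum
  have hLω : ∀ ω, t * L ω = ∑ j ∈ U, Z j ω := by
    intro ω
    rw [hL ω, Finset.mul_sum, hU, Finset.sum_biUnion hdisj]
    refine Finset.sum_congr rfl fun k hk => ?_
    rw [hdotsum, Finset.mul_sum]
    refine Finset.sum_congr rfl fun j hj => ?_
    rw [hZ]
    simp only [hκ_eq k hk j hj, smul_dotProduct, smul_eq_mul]
  -- the value of each factor
  have hfactor : ∀ k ∈ Finset.Icc 1 n, ∀ j ∈ B k,
      (∫ ω, Complex.exp (Complex.I * (Z j ω : ℝ)) ∂μ)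
        = ψ (t ^ 2 * (β k ⬝ᵥ (Ωm *ᵥ β k))) := by
    intro k hk j hj
    have hκj := hκ_eq k hk j hj
    set c : Fin d → ℝ := t • β k with hc
    have hmc : Measurable fun x : Fin d → ℝ => Complex.exp (Complex.I * (c ⬝ᵥ x : ℝ)) :=
      Complex.measurable_exp.comp
        (measurable_const.mul (Complex.measurable_ofReal.comp (hdot c)))
    have h1 : (∫ ω, Complex.exp (Complex.I * (Z j ω : ℝ)) ∂μ)
        = ∫ ω, Complex.exp (Complex.I * (c ⬝ᵥ X j ω : ℝ)) ∂μ := by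
      simp only [hZ, hκj, hc]
    have h2 : (∫ ω, Complex.exp (Complex.I * (c ⬝ᵥ X j ω : ℝ)) ∂μ)
        = ∫ ω, Complex.exp (Complex.I * (c ⬝ᵥ X 1 ω : ℝ)) ∂μ := by
      rw [← integral_map (hXmeas j).aemeasurable hmc.aestronglyMeasurable, hXident j,
        integral_map (hXmeas 1).aemeasurable hmc.aestronglyMeasurable]
    have h3 : c ⬝ᵥ (Ωm *ᵥ c) = t ^ 2 * (β k ⬝ᵥ (Ωm *ᵥ β k)) := by
      simp only [hc, smul_dotProduct, mulVec_smul, dotProduct_smul, smul_eq_mul]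
      ring
    rw [h1, h2, hψ c, h3]
  -- cardinality of each block
  have hcard : ∀ k, (B k).card = h k - h (k - 1) := by
    intro k
    simp only [hB, Nat.card_Icc]
    omega
  -- put everything together
  simp only [← Complex.ofReal_mul]
  simp_rw [hLω]
  rw [integral_cexp_sum_of_iIndepFun Z hZmeas hZindep U, Finset.prod_biUnion hdisj]
  refine Finset.prod_congr rfl fun k hk => ?_
  rw [Finset.prod_congr rfl (hfactor k hk), Finset.prod_const, hcard k]
end

section
/- Let (X_t)_{t≥1} be an i.i.d. sequence of square-integrable mean-zero random vectors in ℝ^d with covariance matrix Σ. Then the standard deviations of the loss L and of the variables L^{(k)} satisfy sd(L) = sqrt( Σ_{k=1}^n ( sqrt((h_k − h_{k−1})/h₁) · sd(L^{(k)}) )² ). -/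
open MeasureTheory ProbabilityTheory Finset Matrix

section Aux
variable {ΩS : Type*} [MeasurableSpace ΩS] {μ : Measure ΩS} [IsProbabilityMeasure μ]
variable {d : ℕ} {X : ℕ → ΩS → Fin d → ℝ}

lemma aux_meas_dot (c : Fin d → ℝ) : Measurable (fun x : Fin d → ℝ => c ⬝ᵥ x) := by
  unfold dotProduct
  exact Finset.measurable_sum _ fun i _ => (measurable_pi_apply i).const_mul _

lemma aux_memlp_dot (hXsq : ∀ t, MemLp (X t) 2 μ) (c : Fin d → ℝ) (t : ℕ) :
    MemLp (fun ω => c ⬝ᵥ X t ω) 2 μ := by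
  have : (fun ω => c ⬝ᵥ X t ω) = fun ω => ∑ i, c i * X t ω i := by
    funext ω; rfl
  rw [this]
  have := memLp_finset_sum' (μ := μ) Finset.univ (f := fun (i : Fin d) ω => c i * X t ω i)
    (fun i _ => (((ContinuousLinearMap.proj i : (Fin d → ℝ) →L[ℝ] ℝ).comp_memLp'
      (hXsq t)).const_mul (c i)))
  convert this using 1
  funext ω; simp

lemma aux_var_ident (hXmeas : ∀ t, Measurable (X t))
    (hXident : ∀ t, Measure.map (X t) μ = Measure.map (X 1) μ)
    (hXsq : ∀ t, MemLp (X t) 2 μ) (c : Fin d → ℝ) (t : ℕ) :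
    variance (fun ω => c ⬝ᵥ X t ω) μ = variance (fun ω => c ⬝ᵥ X 1 ω) μ := by
  have hint : ∀ s : ℕ, ∀ g : (Fin d → ℝ) → ℝ, Measurable g →
      ∫ ω, g (X s ω) ∂μ = ∫ x, g x ∂(Measure.map (X 1) μ) := by
    intro s g hg
    rw [← hXident s, integral_map (hXmeas s).aemeasurable hg.aestronglyMeasurable]
  rw [variance_eq_sub (aux_memlp_dot hXsq c t), variance_eq_sub (aux_memlp_dot hXsq c 1)]
  have h1 := hint t (fun x => c ⬝ᵥ x) (aux_meas_dot c)
  have h2 := hint 1 (fun x => c ⬝ᵥ x) (aux_meas_dot c)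
  have h3 := hint t (fun x => (c ⬝ᵥ x) ^ 2) ((aux_meas_dot c).pow_const 2)
  have h4 := hint 1 (fun x => (c ⬝ᵥ x) ^ 2) ((aux_meas_dot c).pow_const 2)
  simp only [Pi.pow_apply]
  rw [h1, h2, h3, h4]

/-- Variance of a sum of dot products against distinct i.i.d. vectors. -/
lemma aux_var_sum {ι : Type*} (hXmeas : ∀ t, Measurable (X t))
    (hXindep : iIndepFun X μ)
    (hXident : ∀ t, Measure.map (X t) μ = Measure.map (X 1) μ)
    (hXsq : ∀ t, MemLp (X t) 2 μ)
    (s : Finset ι) (a : ι → Fin d → ℝ) (e : ι → ℕ) (hinj : Set.InjOn e s) :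
    variance (fun ω => ∑ p ∈ s, a p ⬝ᵥ X (e p) ω) μ
      = ∑ p ∈ s, variance (fun ω => a p ⬝ᵥ X 1 ω) μ := by
  have hvs : variance (∑ p ∈ s, fun ω => a p ⬝ᵥ X (e p) ω) μ
      = ∑ p ∈ s, variance (fun ω => a p ⬝ᵥ X (e p) ω) μ := by
    refine IndepFun.variance_sum (fun p _ => aux_memlp_dot hXsq _ _) ?_
    intro p hp q hq hpq
    have he : e p ≠ e q := fun hepq => hpq (hinj hp hq hepq)
    exact (hXindep.indepFun he).comp (aux_meas_dot (a p)) (aux_meas_dot (a q))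
  have : (fun ω => ∑ p ∈ s, a p ⬝ᵥ X (e p) ω) = ∑ p ∈ s, fun ω => a p ⬝ᵥ X (e p) ω := by
    funext ω; simp
  rw [this, hvs]
  exact Finset.sum_congr rfl fun p _ => aux_var_ident hXmeas hXident hXsq _ _


lemma aux_dot_sum {d : ℕ} (c : Fin d → ℝ) {ι : Type*} (s : Finset ι) (f : ι → Fin d → ℝ) :
    c ⬝ᵥ (∑ j ∈ s, f j) = ∑ j ∈ s, c ⬝ᵥ f j := by
  unfold dotProduct
  simp only [Finset.sum_apply, Finset.mul_sum]
  rw [Finset.sum_comm]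

end Aux

/-- **Square-root-of-time aggregation of standard deviations.**
If `(X_t)_{t≥1}` are i.i.d. square-integrable mean-zero random vectors in `ℝ^d`, then
the loss `L = ∑_{k=1}^n β_k ⬝ (∑_{j=h_{k-1}+1}^{h_k} X_j)` and the variables
`L⁽ᵏ⁾ = β_k ⬝ (∑_{j=1}^{h₁} X_j)` satisfy
`sd(L) = √( ∑_{k=1}^n ( √((h_k - h_{k-1})/h₁) · sd(L⁽ᵏ⁾) )² )`. -/
theorem sd_loss_aggregation
    {ΩS : Type*} [MeasurableSpace ΩS] (μ : Measure ΩS) [IsProbabilityMeasure μ]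
    (d n : ℕ) (hd : 1 ≤ d) (hn : 1 ≤ n)
    (h : ℕ → ℕ) (h0 : h 0 = 0) (hmono : ∀ k < n, h k < h (k + 1))
    (b : ℕ → Fin d → ℝ) (β : ℕ → Fin d → ℝ)
    (hβ : ∀ k, β k = ∑ j ∈ Finset.Icc k n, b j)
    (X : ℕ → ΩS → Fin d → ℝ) (hXmeas : ∀ t, Measurable (X t))
    (hXindep : iIndepFun X μ)
    (hXident : ∀ t, Measure.map (X t) μ = Measure.map (X 1) μ)
    (hXsq : ∀ t, MemLp (X t) 2 μ)
    (hXmean : ∀ i, ∫ ω, X 1 ω i ∂μ = 0)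
    (L : ΩS → ℝ)
    (hL : ∀ ω, L ω =
      ∑ k ∈ Finset.Icc 1 n, β k ⬝ᵥ (∑ j ∈ Finset.Icc (h (k - 1) + 1) (h k), X j ω))
    (Lk : ℕ → ΩS → ℝ)
    (hLk : ∀ k ω, Lk k ω = β k ⬝ᵥ (∑ j ∈ Finset.Icc 1 (h 1), X j ω)) :
    Real.sqrt (variance L μ) = Real.sqrt (∑ k ∈ Finset.Icc 1 n,
      (Real.sqrt (((h k : ℝ) - (h (k - 1) : ℝ)) / (h 1 : ℝ)) *
        Real.sqrt (variance (Lk k) μ)) ^ 2) := by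
  classical
  have h1pos : 0 < h 1 := by simpa [h0] using hmono 0 hn
  -- monotonicity of h on [0, n]
  have hle : ∀ a b, a ≤ b → b ≤ n → h a ≤ h b := by
    intro a b
    induction b with
    | zero =>
      intro hab _
      have : a = 0 := by omega
      rw [this]
    | succ m ih =>
      intro hab hbn
      rcases Nat.lt_or_ge a (m + 1) with h' | h'
      · exact le_trans (ih (by omega) (by omega)) (le_of_lt (hmono m (by omega)))
      · have : a = m + 1 := by omega
        rw [this]
  have hhk : ∀ k ∈ Finset.Icc 1 n, h (k - 1) ≤ h k := by
    intro k hk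
    simp only [Finset.mem_Icc] at hk
    exact hle (k - 1) k (by omega) hk.2
  set v : ℕ → ℝ := fun k => variance (fun ω => β k ⬝ᵥ X 1 ω) μ with hv
  -- variance of Lk
  have hvarLk : ∀ k, variance (Lk k) μ = (h 1 : ℝ) * v k := by
    intro k
    have heq : Lk k = fun ω => ∑ j ∈ Finset.Icc 1 (h 1), β k ⬝ᵥ X j ω := by
      funext ω
      rw [hLk k ω, aux_dot_sum]
    rw [heq, aux_var_sum hXmeas hXindep hXident hXsq (Finset.Icc 1 (h 1))
      (fun _ => β k) (fun j => j) (Function.injective_id.injOn),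
      Finset.sum_const, Nat.card_Icc]
    simp [hv]
  -- variance of L
  have hvarL : variance L μ = ∑ k ∈ Finset.Icc 1 n, ((h k : ℝ) - (h (k - 1) : ℝ)) * v k := by
    set S : Finset ((_ : ℕ) × ℕ) :=
      (Finset.Icc 1 n).sigma (fun k => Finset.Icc (h (k - 1) + 1) (h k)) with hS
    have heq : L = fun ω => ∑ p ∈ S, β p.1 ⬝ᵥ X p.2 ω := by
      funext ω
      rw [hL ω, hS, Finset.sum_sigma]
      exact Finset.sum_congr rfl fun k _ => aux_dot_sum _ _ _
    have hinj : Set.InjOn (fun p : (_ : ℕ) × ℕ => p.2) S := by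
      intro p hp q hq hpq
      simp only [hS, Finset.mem_coe, Finset.mem_sigma, Finset.mem_Icc] at hp hq
      have hpq' : p.2 = q.2 := hpq
      have hfst : p.1 = q.1 := by
        by_contra hne
        rcases Nat.lt_or_ge p.1 q.1 with hlt | hge
        · have : h p.1 ≤ h (q.1 - 1) := hle p.1 (q.1 - 1) (by omega) (by omega)
          omega
        · have hlt : q.1 < p.1 := by omega
          have : h q.1 ≤ h (p.1 - 1) := hle q.1 (p.1 - 1) (by omega) (by omega)
          omega
      exact Sigma.ext hfst (by simp only [hpq, heq_eq_eq])
    rw [heq, aux_var_sum hXmeas hXindep hXident hXsq S (fun p => β p.1)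
      (fun p => p.2) hinj, hS, Finset.sum_sigma]
    refine Finset.sum_congr rfl fun k hk => ?_
    dsimp only
    simp only [hv]
    rw [Finset.sum_const, Nat.card_Icc, Nat.add_sub_add_right, nsmul_eq_mul,
      Nat.cast_sub (hhk k hk)]
  -- conclude
  rw [hvarL]
  congr 1
  refine Finset.sum_congr rfl fun k hk => ?_
  have hr : (0 : ℝ) ≤ ((h k : ℝ) - (h (k - 1) : ℝ)) / (h 1 : ℝ) := by
    apply div_nonneg
    · have := hhk k hk; simp only [sub_nonneg]; exact_mod_cast this
    · positivity
  rw [mul_pow, Real.sq_sqrt hr, Real.sq_sqrt (variance_nonneg _ _), hvarLk k]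
  have h1ne : (h 1 : ℝ) ≠ 0 := by positivity
  field_simp
end

section
/- Let λ > 0, let W have the Gamma distribution with shape λ and rate 1, and let V be a standard normal random variable independent of W. Then Y = √W · V has characteristic function E[e^{isY}] = (1 + s²/2)^{−λ} for all s ∈ ℝ. -/
open MeasureTheory ProbabilityTheory Complex Set
open scoped ENNReal NNReal Real


lemma gauss_cf_aux (t : ℝ) :
    ∫ v : ℝ, Complex.exp (Complex.I * ((t * v : ℝ) : ℂ)) ∂(gaussianReal 0 1)
      = ((Real.exp (-(t ^ 2) / 2) : ℝ) : ℂ) := by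
  rw [gaussianReal_of_var_ne_zero 0 one_ne_zero]
  have hd : gaussianPDF 0 1 = fun x => ((Real.toNNReal (gaussianPDFReal 0 1 x) : ℝ≥0) : ℝ≥0∞) :=
    rfl
  rw [hd, integral_withDensity_eq_integral_smul (measurable_gaussianPDFReal 0 1).real_toNNReal]
  have hpt : ∀ x : ℝ, (Real.toNNReal (gaussianPDFReal 0 1 x)) •
      Complex.exp (Complex.I * ((t * x : ℝ) : ℂ)) =
      ((Real.sqrt (2 * Real.pi) : ℝ) : ℂ)⁻¹ *
        (Complex.exp (Complex.I * (t : ℂ) * (x : ℂ)) *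
          Complex.exp (-(1/2 : ℂ) * (x : ℂ) ^ 2)) := by
    intro x
    rw [NNReal.smul_def, Real.coe_toNNReal _ (gaussianPDFReal_nonneg 0 1 x)]
    rw [Complex.real_smul]
    unfold gaussianPDFReal
    push_cast
    simp only [mul_one, mul_assoc, ← Complex.exp_add]
    congr 1
    ring_nf
  simp_rw [hpt]
  rw [integral_const_mul, fourierIntegral_gaussian (by norm_num : (0:ℝ) < ((1:ℂ)/2).re) (t : ℂ)]
  have h2 : ((π : ℂ) / (1/2 : ℂ)) = ((2 * π : ℝ) : ℂ) := by push_cast; ring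
  rw [h2]
  have h3 : ((2 * π : ℝ) : ℂ) ^ (1/2 : ℂ) = ((Real.sqrt (2 * π) : ℝ) : ℂ) := by
    rw [Real.sqrt_eq_rpow, Complex.ofReal_cpow (by positivity)]
    norm_num
  rw [h3]
  have h4 : Real.sqrt (2 * π) ≠ 0 := by positivity
  rw [← mul_assoc, inv_mul_cancel₀ (by exact_mod_cast h4), one_mul]
  rw [Complex.ofReal_exp]
  push_cast
  norm_num


lemma gamma_lap_aux {lam : ℝ} (hlam : 0 < lam) {c : ℝ} (hc : 0 ≤ c) :
    ∫ w, Real.exp (-(c * w)) ∂(gammaMeasure lam 1) = (1 + c) ^ (-lam) := by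
  rw [gammaMeasure]
  have hd : gammaPDF lam 1 = fun x => ((Real.toNNReal (gammaPDFReal lam 1 x) : ℝ≥0) : ℝ≥0∞) :=
    rfl
  rw [hd, integral_withDensity_eq_integral_smul (measurable_gammaPDFReal lam 1).real_toNNReal]
  have hpt : ∀ x : ℝ, (Real.toNNReal (gammaPDFReal lam 1 x)) • Real.exp (-(c * x)) =
      Set.indicator (Set.Ici (0:ℝ))
        (fun x => (Real.Gamma lam)⁻¹ * (x ^ (lam - 1) * Real.exp (-((1 + c) * x)))) x := by
    intro x
    rw [NNReal.smul_def, Real.coe_toNNReal _ (gammaPDFReal_nonneg hlam one_pos x)]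
    unfold gammaPDFReal
    by_cases hx : 0 ≤ x
    · simp only [if_pos hx, Set.indicator_of_mem (Set.mem_Ici.mpr hx), smul_eq_mul,
        Real.one_rpow, Real.rpow_one]
      rw [one_mul, mul_assoc, mul_assoc, ← Real.exp_add]
      rw [one_div]
      congr 2
      ring_nf
    · simp [if_neg hx, Set.indicator_of_notMem (fun h => hx (Set.mem_Ici.mp h))]
  simp_rw [hpt]
  rw [integral_indicator measurableSet_Ici, MeasureTheory.integral_Ici_eq_integral_Ioi,
    integral_const_mul, Real.integral_rpow_mul_exp_neg_mul_Ioi hlam (by positivity : (0:ℝ) < 1 + c)]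
  rw [← mul_assoc, mul_comm ((Real.Gamma lam)⁻¹), mul_assoc,
    inv_mul_cancel₀ (Real.Gamma_pos_of_pos hlam).ne', mul_one, one_div,
    Real.inv_rpow (by positivity), ← Real.rpow_neg (by positivity)]

/-- **Characteristic function of the (standardized symmetric) variance gamma
distribution.** If `W ~ Gamma(λ, 1)` and `V` is an independent standard normal
random variable, then `Y = √W · V` has characteristic function
`E[exp(i s Y)] = (1 + s²/2)^{-λ}` for all `s ∈ ℝ`. -/
theorem charFun_variance_gamma
    {Ω : Type*} [MeasurableSpace Ω] (μ : Measure Ω) [IsProbabilityMeasure μ]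
    (lam : ℝ) (hlam : 0 < lam)
    (W V : Ω → ℝ) (hWmeas : Measurable W) (hVmeas : Measurable V)
    (hW : Measure.map W μ = gammaMeasure lam 1)
    (hV : Measure.map V μ = gaussianReal 0 1)
    (hindep : IndepFun W V μ)
    (Y : Ω → ℝ) (hY : ∀ ω, Y ω = Real.sqrt (W ω) * V ω) :
    ∀ s : ℝ,
      (∫ ω, Complex.exp (Complex.I * (s * Y ω)) ∂μ) =
        (((1 + s ^ 2 / 2 : ℝ) ^ (-lam) : ℝ) : ℂ) := by
  intro s
  have hPgamma : IsProbabilityMeasure (gammaMeasure lam 1) :=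
    isProbabilityMeasure_gammaMeasure hlam one_pos
  set g : ℝ × ℝ → ℂ := fun p =>
      Complex.exp (Complex.I * ((s : ℂ) * ((Real.sqrt p.1 * p.2 : ℝ) : ℂ))) with hg
  have hgm : Measurable g := by
    apply Complex.measurable_exp.comp
    apply measurable_const.mul
    exact measurable_const.mul (Complex.measurable_ofReal.comp
      ((Real.continuous_sqrt.measurable.comp measurable_fst).mul measurable_snd))
  have hmapprod : μ.map (fun ω => (W ω, V ω)) = (gammaMeasure lam 1).prod (gaussianReal 0 1) := by
    rw [← hW, ← hV]
    exact (indepFun_iff_map_prod_eq_prod_map_map hWmeas.aemeasurable hVmeas.aemeasurable).1 hindep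
  have step1 : (∫ ω, Complex.exp (Complex.I * (s * Y ω)) ∂μ)
      = ∫ p, g p ∂((gammaMeasure lam 1).prod (gaussianReal 0 1)) := by
    rw [← hmapprod, integral_map (hWmeas.prodMk hVmeas).aemeasurable hgm.aestronglyMeasurable]
    simp_rw [hY]
    rfl
  rw [step1]
  have hint : Integrable g ((gammaMeasure lam 1).prod (gaussianReal 0 1)) := by
    refine (integrable_const (1:ℝ)).mono' hgm.aestronglyMeasurable (ae_of_all _ fun p => ?_)
    rw [hg]
    simp only
    have : (Complex.I : ℂ) * ((s : ℂ) * ((Real.sqrt p.1 * p.2 : ℝ) : ℂ))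
        = ((s * (Real.sqrt p.1 * p.2) : ℝ) : ℂ) * Complex.I := by push_cast; ring
    rw [this, Complex.norm_exp_ofReal_mul_I]
  rw [MeasureTheory.integral_prod _ hint]
  have inner : ∀ w : ℝ, (∫ v, g (w, v) ∂(gaussianReal 0 1))
      = ((Real.exp (-((s * Real.sqrt w) ^ 2) / 2) : ℝ) : ℂ) := by
    intro w
    rw [← gauss_cf_aux (s * Real.sqrt w)]
    refine integral_congr_ae (Filter.Eventually.of_forall fun v => ?_)
    rw [hg]
    simp only
    congr 1
    push_cast
    ring
  simp_rw [inner]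
  have hae : ∀ᵐ w ∂(gammaMeasure lam 1), 0 ≤ w := by
    rw [ae_iff]
    have hs : {w : ℝ | ¬ 0 ≤ w} = Set.Iio 0 := by ext x; simp
    rw [hs, gammaMeasure, withDensity_apply _ measurableSet_Iio,
      setLIntegral_congr_fun_ae measurableSet_Iio
        (ae_of_all _ fun x hx => gammaPDF_of_neg hx), lintegral_zero]
  have step2 : (∫ w, ((Real.exp (-((s * Real.sqrt w) ^ 2) / 2) : ℝ) : ℂ) ∂(gammaMeasure lam 1))
      = ∫ w, ((Real.exp (-((s ^ 2 / 2) * w)) : ℝ) : ℂ) ∂(gammaMeasure lam 1) := by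
    refine integral_congr_ae (hae.mono fun w hw => ?_)
    simp only [mul_pow, Real.sq_sqrt hw]
    norm_num
    ring_nf
  have hco : (∫ w, ((Real.exp (-((s ^ 2 / 2) * w)) : ℝ) : ℂ) ∂(gammaMeasure lam 1))
      = ((∫ w, Real.exp (-((s ^ 2 / 2) * w)) ∂(gammaMeasure lam 1) : ℝ) : ℂ) := integral_ofReal
  rw [step2, hco, gamma_lap_aux hlam (by positivity : (0:ℝ) ≤ s ^ 2 / 2)]
end
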